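/- Let K ⊂ ℝ^d be nonempty compact and let ψ be a feedforward neural network with depth L ∈ ℕ, widths w_i ∈ ℕ, and continuous activation functions σ_i. Suppose each σ_i, i = 1,…,L, is affine and nonconstant on some nonempty open interval I_i ⊂ ℝ, and suppose L: C(K) × C(K) → ℝ and y_T ∈ C(K) are such that the problem of minimizing L(z_{a,c}, y_T) over (a,c) ∈ ℝ^d × ℝ, where z_{a,c}(x) = aᵀx + c, has a global solution. Then there exists a set E ⊂ D with Hausdorff dimension dim_H(E) ≥ m − d − 1 such that every element of E is a local minimum of the training problem (P) and L(Ψ(α), y_T) = min_{(a,c) ∈ ℝ^d × ℝ} L(z_{a,c}, y_T) holds for all α ∈ E. -/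

import Mathlib

open scoped BigOperators ENNReal NNReal

/-- Parameter space `D` of a feedforward network with `L` hidden layers and width
function `w` (`w 0 = d` is the input dimension, hidden layer `i` has width `w i` for
`i = 1, …, L`, and the output layer has width one). The component for `i : Fin L`
consists of the weight matrix `A_{i+1}` and the bias vector `b_{i+1}`; the last
component consists of the output weights `A_{L+1}` and the output bias `b_{L+1}`. -/
abbrev Params (w : ℕ → ℕ) (L : ℕ) : Type :=
  (∀ i : Fin L, ((Fin (w (i + 1)) → Fin (w i) → ℝ) × (Fin (w (i + 1)) → ℝ))) ×
    ((Fin (w L) → ℝ) × ℝ)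

/-- The number of degrees of freedom `m = Σ_{i=1}^{L+1} w_i (w_{i-1} + 1)` of the
network (with `w_{L+1} = 1`). -/
def mdim (w : ℕ → ℕ) (L : ℕ) : ℕ :=
  (∑ i ∈ Finset.range L, w (i + 1) * (w i + 1)) + (w L + 1)

/-- Output of the first `k` hidden layers of the network. -/
noncomputable def hiddenOut (σ : ℕ → ℝ → ℝ) (w : ℕ → ℕ) (L : ℕ)
    (θ : ∀ i : Fin L, ((Fin (w (i + 1)) → Fin (w i) → ℝ) × (Fin (w (i + 1)) → ℝ))) :
    ∀ k : ℕ, k ≤ L → (Fin (w 0) → ℝ) → Fin (w k) → ℝ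
  | 0, _, x => x
  | k + 1, h, x => fun i =>
      σ (k + 1)
        ((∑ j, (θ ⟨k, h⟩).1 i j * hiddenOut σ w L θ k (Nat.le_of_succ_le h) x j) +
          (θ ⟨k, h⟩).2 i)

/-- The scalar output `ψ(α, x)` of the feedforward network. -/
noncomputable def netFun (σ : ℕ → ℝ → ℝ) (w : ℕ → ℕ) (L : ℕ) (α : Params w L)
    (x : Fin (w 0) → ℝ) : ℝ :=
  (∑ j, α.2.1 j * hiddenOut σ w L α.1 L le_rfl x j) + α.2.2

lemma continuous_hiddenOut {σ : ℕ → ℝ → ℝ} {w : ℕ → ℕ} {L : ℕ}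
    (hσ : ∀ i, 1 ≤ i → i ≤ L → Continuous (σ i))
    (θ : ∀ i : Fin L, ((Fin (w (i + 1)) → Fin (w i) → ℝ) × (Fin (w (i + 1)) → ℝ))) :
    ∀ (k : ℕ) (h : k ≤ L), Continuous fun x => hiddenOut σ w L θ k h x := by
  intro k
  induction k with
  | zero =>
      intro h
      refine (continuous_id : Continuous fun x : Fin (w 0) → ℝ => x).congr ?_
      intro x
      simp [hiddenOut]
  | succ k ih =>
      intro h
      apply continuous_pi
      intro i
      simp only [hiddenOut]
      exact (hσ (k + 1) (Nat.succ_le_succ (Nat.zero_le _)) h).comp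
        ((continuous_finset_sum _ fun j _ =>
          continuous_const.mul ((continuous_apply j).comp (ih (Nat.le_of_succ_le h)))).add
          continuous_const)

lemma continuous_netFun {σ : ℕ → ℝ → ℝ} {w : ℕ → ℕ} {L : ℕ}
    (hσ : ∀ i, 1 ≤ i → i ≤ L → Continuous (σ i)) (α : Params w L) :
    Continuous fun x => netFun σ w L α x := by
  unfold netFun
  exact (continuous_finset_sum _ fun j _ =>
    continuous_const.mul
      ((continuous_apply j).comp (continuous_hiddenOut hσ α.1 L le_rfl))).add continuous_const

/-- The parameter-to-realization map `Ψ : D → C(K)`. -/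
noncomputable def Psi (σ : ℕ → ℝ → ℝ) (w : ℕ → ℕ) (L : ℕ)
    (hσ : ∀ i, 1 ≤ i → i ≤ L → Continuous (σ i)) (K : Set (Fin (w 0) → ℝ))
    (α : Params w L) : C(K, ℝ) :=
  ⟨fun x => netFun σ w L α x, (continuous_netFun hσ α).comp continuous_subtype_val⟩

/-- The affine function `z_{a,c} : x ↦ aᵀ x + c` as an element of `C(K)`. -/
noncomputable def affineCM {n : ℕ} (K : Set (Fin n → ℝ)) (a : Fin n → ℝ) (c : ℝ) :
    C(K, ℝ) :=
  ⟨fun x => (∑ j, a j * (x : Fin n → ℝ) j) + c,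
    (continuous_finset_sum _ fun j _ =>
      continuous_const.mul ((continuous_apply j).comp continuous_subtype_val)).add
      continuous_const⟩

/-- The constant function `z_c : x ↦ c` as an element of `C(K)`. -/
noncomputable def constCM {n : ℕ} (K : Set (Fin n → ℝ)) (c : ℝ) : C(K, ℝ) :=
  ⟨fun _ => c, continuous_const⟩

/-- A function `ℝ → ℝ` is nonpolynomial if it is not the restriction of a polynomial. -/
def IsNonpolynomial (σ : ℝ → ℝ) : Prop :=
  ¬ ∃ p : Polynomial ℝ, ∀ x : ℝ, σ x = p.eval x

/-- `𝓛` is Gâteaux differentiable in its first argument at `(v, y)` with partial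
derivative (identified with an element of `M(K) = C(K)*`) given by the continuous
linear functional `T`. -/
def HasGateauxDerivFirst {n : ℕ} {K : Set (Fin n → ℝ)}
    (𝓛 : C(K, ℝ) → C(K, ℝ) → ℝ) (v y : C(K, ℝ)) (T : C(K, ℝ) →L[ℝ] ℝ) : Prop :=
  ∀ h : C(K, ℝ), Filter.Tendsto (fun s : ℝ => (𝓛 (v + s • h) y - 𝓛 v y) / s)
    (nhdsWithin 0 (Set.Ioi 0)) (nhds (T h))


section Aux

open Finset

/-- The hidden-parameter part of `Params`. -/
abbrev Hid (w : ℕ → ℕ) (L : ℕ) : Type :=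
  ∀ i : Fin L, ((Fin (w (i + 1)) → Fin (w i) → ℝ) × (Fin (w (i + 1)) → ℝ))

/-- Coefficient matrices of the affine form of the hidden layers. -/
noncomputable def nQa (βv : ℕ → ℝ) (w : ℕ → ℕ) (L : ℕ) (θ : Hid w L) :
    (k : ℕ) → k < L → Fin (w (k + 1)) → Fin (w 1) → ℝ
  | 0, _ => fun i j => if i = j then βv 1 else 0
  | k + 1, h => fun i j =>
      βv (k + 2) * ∑ j', (θ ⟨k + 1, h⟩).1 i j' * nQa βv w L θ k (Nat.lt_of_succ_lt h) j' j

/-- Constant (bias) part of the affine form of the hidden layers. -/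
noncomputable def nua (βv γv : ℕ → ℝ) (w : ℕ → ℕ) (L : ℕ) (θ : Hid w L) :
    (k : ℕ) → k < L → Fin (w (k + 1)) → ℝ
  | 0, h => fun i => βv 1 * (θ ⟨0, h⟩).2 i + γv 1
  | k + 1, h => fun i =>
      βv (k + 2) * ((∑ j', (θ ⟨k + 1, h⟩).1 i j' * nua βv γv w L θ k (Nat.lt_of_succ_lt h) j') +
        (θ ⟨k + 1, h⟩).2 i) + γv (k + 2)

/-- All pre-activations at input `x` lie in the prescribed open intervals. -/
def nGoodAt (σ : ℕ → ℝ → ℝ) (w : ℕ → ℕ) (L : ℕ) (sv tv : ℕ → ℝ) (θ : Hid w L)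
    (x : Fin (w 0) → ℝ) : Prop :=
  ∀ (k : Fin L) (i : Fin (w (k + 1))),
    (∑ j, (θ k).1 i j * hiddenOut σ w L θ k k.isLt.le x j) + (θ k).2 i ∈
      Set.Ioo (sv ((k : ℕ) + 1)) (tv ((k : ℕ) + 1))

lemma nQa_congr (βv : ℕ → ℝ) (w : ℕ → ℕ) (L : ℕ) (θ θ' : Hid w L)
    (hag : ∀ i : Fin L, 0 < (i : ℕ) → θ' i = θ i) :
    ∀ (k : ℕ) (h : k < L), nQa βv w L θ' k h = nQa βv w L θ k h := by
  intro k
  induction k with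
  | zero => intro h; rfl
  | succ k ih =>
      intro h
      funext i j
      simp only [nQa, hag ⟨k + 1, h⟩ (Nat.succ_pos k), ih (Nat.lt_of_succ_lt h)]

lemma nua_congr (βv γv : ℕ → ℝ) (w : ℕ → ℕ) (L : ℕ) (θ θ' : Hid w L)
    (hag : ∀ i : Fin L, 0 < (i : ℕ) → θ' i = θ i)
    (hb : ∀ h : 0 < L, (θ' ⟨0, h⟩).2 = (θ ⟨0, h⟩).2) :
    ∀ (k : ℕ) (h : k < L), nua βv γv w L θ' k h = nua βv γv w L θ k h := by
  intro k
  induction k with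
  | zero =>
      intro h
      funext i
      simp only [nua, hb h]
  | succ k ih =>
      intro h
      funext i
      simp only [nua, hag ⟨k + 1, h⟩ (Nat.succ_pos k), ih (Nat.lt_of_succ_lt h)]

lemma hiddenOut_affine (σ : ℕ → ℝ → ℝ) (w : ℕ → ℕ) (L : ℕ) (βv γv sv tv : ℕ → ℝ)
    (hσa : ∀ k : ℕ, k < L → ∀ y ∈ Set.Ioo (sv (k + 1)) (tv (k + 1)),
      σ (k + 1) y = βv (k + 1) * y + γv (k + 1))
    (θ : Hid w L) (x : Fin (w 0) → ℝ) (hx : nGoodAt σ w L sv tv θ x) :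
    ∀ (k : ℕ) (h : k < L) (i : Fin (w (k + 1))),
      hiddenOut σ w L θ (k + 1) h x i =
        (∑ j, nQa βv w L θ k h i j *
            (∑ j', (θ ⟨0, Nat.lt_of_le_of_lt (Nat.zero_le k) h⟩).1 j j' * x j')) +
          nua βv γv w L θ k h i := by
  intro k
  induction k with
  | zero =>
      intro h i
      have hmem := hx ⟨0, h⟩ i
      rw [show hiddenOut σ w L θ (0 + 1) h x i =
          βv 1 * ((∑ j, (θ ⟨0, h⟩).1 i j * x j) + (θ ⟨0, h⟩).2 i) + γv 1 from
        hσa 0 h _ hmem]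
      simp only [nQa, nua, ite_mul, zero_mul, Finset.sum_ite_eq, Finset.mem_univ, if_true]
      ring
  | succ k ih =>
      intro k_lt i
      have h' := Nat.lt_of_succ_lt k_lt
      have hmem := hx ⟨k + 1, k_lt⟩ i
      rw [show hiddenOut σ w L θ (k + 1 + 1) k_lt x i =
          βv (k + 1 + 1) *
            ((∑ j, (θ ⟨k + 1, k_lt⟩).1 i j *
                hiddenOut σ w L θ (k + 1) (Nat.le_of_succ_le k_lt) x j) +
              (θ ⟨k + 1, k_lt⟩).2 i) + γv (k + 1 + 1) from
        hσa (k + 1) k_lt _ hmem]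
      have hsum : (∑ j, (θ ⟨k + 1, k_lt⟩).1 i j *
            hiddenOut σ w L θ (k + 1) (Nat.le_of_succ_le k_lt) x j) =
          (∑ jq, (∑ j, (θ ⟨k + 1, k_lt⟩).1 i j * nQa βv w L θ k h' j jq) *
              (∑ j', (θ ⟨0, Nat.lt_of_le_of_lt (Nat.zero_le k) h'⟩).1 jq j' * x j')) +
            ∑ j, (θ ⟨k + 1, k_lt⟩).1 i j * nua βv γv w L θ k h' j := by
        rw [Finset.sum_congr rfl fun j _ => by rw [ih h' j]]
        simp only [mul_add, Finset.sum_add_distrib, Finset.mul_sum]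
        rw [Finset.sum_comm]
        simp only [Finset.sum_mul, mul_assoc]
        exact congrArg₂ (· + ·) (Finset.sum_congr rfl fun jq _ => Finset.sum_comm) rfl
      rw [hsum]
      simp only [nQa, nua, Finset.mul_sum, Finset.sum_mul, mul_assoc]
      ring_nf
      simp only [Finset.mul_sum]
      ac_rfl


lemma continuous_nQa (βv : ℕ → ℝ) (w : ℕ → ℕ) (L : ℕ) :
    ∀ (k : ℕ) (h : k < L), Continuous fun θ : Hid w L => nQa βv w L θ k h := by
  intro k
  induction k with
  | zero => intro h; exact continuous_const
  | succ k ih =>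
      intro h
      simp only [nQa]
      refine continuous_pi fun i => continuous_pi fun j => ?_
      refine continuous_const.mul (continuous_finset_sum _ fun j' _ => Continuous.mul ?_ ?_)
      · exact (continuous_apply j').comp ((continuous_apply i).comp
          (continuous_fst.comp (continuous_apply (⟨k + 1, h⟩ : Fin L))))
      · exact (continuous_apply j).comp ((continuous_apply j').comp (ih (Nat.lt_of_succ_lt h)))

lemma continuous_nua (βv γv : ℕ → ℝ) (w : ℕ → ℕ) (L : ℕ) :
    ∀ (k : ℕ) (h : k < L), Continuous fun θ : Hid w L => nua βv γv w L θ k h := by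
  intro k
  induction k with
  | zero =>
      intro h
      simp only [nua]
      refine continuous_pi fun i => Continuous.add (Continuous.mul continuous_const ?_)
        continuous_const
      exact (continuous_apply i).comp (continuous_snd.comp (continuous_apply (⟨0, h⟩ : Fin L)))
  | succ k ih =>
      intro h
      simp only [nua]
      refine continuous_pi fun i => ?_
      refine (continuous_const.mul (Continuous.add (continuous_finset_sum _
        fun j' _ => Continuous.mul ?_ ?_) ?_)).add continuous_const
      · exact (continuous_apply j').comp ((continuous_apply i).comp
          (continuous_fst.comp (continuous_apply (⟨k + 1, h⟩ : Fin L))))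
      · exact (continuous_apply j').comp (ih (Nat.lt_of_succ_lt h))
      · exact (continuous_apply i).comp (continuous_snd.comp
          (continuous_apply (⟨k + 1, h⟩ : Fin L)))

lemma continuous_hiddenOut2 {σ : ℕ → ℝ → ℝ} {w : ℕ → ℕ} {L : ℕ}
    (hσ : ∀ i, 1 ≤ i → i ≤ L → Continuous (σ i)) :
    ∀ (k : ℕ) (h : k ≤ L),
      Continuous fun p : Hid w L × (Fin (w 0) → ℝ) => hiddenOut σ w L p.1 k h p.2 := by
  intro k
  induction k with
  | zero =>
      intro h
      have : Continuous fun p : Hid w L × (Fin (w 0) → ℝ) => p.2 := continuous_snd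
      exact this
  | succ k ih =>
      intro h
      refine continuous_pi fun i => ?_
      refine (hσ (k + 1) (Nat.succ_le_succ (Nat.zero_le k)) h).comp
        (Continuous.add (continuous_finset_sum _ fun j _ => Continuous.mul ?_ ?_) ?_)
      · exact (continuous_apply j).comp ((continuous_apply i).comp
          (continuous_fst.comp ((continuous_apply (⟨k, h⟩ : Fin L)).comp continuous_fst)))
      · exact (continuous_apply j).comp (ih (Nat.le_of_succ_le h))
      · exact (continuous_apply i).comp (continuous_snd.comp
          ((continuous_apply (⟨k, h⟩ : Fin L)).comp continuous_fst))


/-- Linear part coefficient of the whole network. -/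
noncomputable def nrv (βv : ℕ → ℝ) (w : ℕ → ℕ) (L' : ℕ) (α : Params w (L' + 1)) :
    Fin (w 1) → ℝ :=
  fun j => ∑ j', α.2.1 j' * nQa βv w (L' + 1) α.1 L' (Nat.lt_succ_self L') j' j

noncomputable def nuvL (βv γv : ℕ → ℝ) (w : ℕ → ℕ) (L' : ℕ) (α : Params w (L' + 1)) :
    Fin (w (L' + 1)) → ℝ :=
  nua βv γv w (L' + 1) α.1 L' (Nat.lt_succ_self L')

noncomputable def nav (βv : ℕ → ℝ) (w : ℕ → ℕ) (L' : ℕ) (α : Params w (L' + 1)) :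
    Fin (w 0) → ℝ :=
  fun j'' => ∑ j, nrv βv w L' α j * (α.1 ⟨0, Nat.succ_pos L'⟩).1 j j''

noncomputable def ncv (βv γv : ℕ → ℝ) (w : ℕ → ℕ) (L' : ℕ) (α : Params w (L' + 1)) : ℝ :=
  (∑ j, α.2.1 j * nuvL βv γv w L' α j) + α.2.2

lemma netFun_affine (σ : ℕ → ℝ → ℝ) (w : ℕ → ℕ) (L' : ℕ) (βv γv sv tv : ℕ → ℝ)
    (hσa : ∀ k : ℕ, k < L' + 1 → ∀ y ∈ Set.Ioo (sv (k + 1)) (tv (k + 1)),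
      σ (k + 1) y = βv (k + 1) * y + γv (k + 1))
    (α : Params w (L' + 1)) (x : Fin (w 0) → ℝ) (hx : nGoodAt σ w (L' + 1) sv tv α.1 x) :
    netFun σ w (L' + 1) α x =
      (∑ j'', nav βv w L' α j'' * x j'') + ncv βv γv w L' α := by
  have hrep := hiddenOut_affine σ w (L' + 1) βv γv sv tv hσa α.1 x hx L' (Nat.lt_succ_self L')
  unfold netFun nav ncv nrv nuvL
  rw [Finset.sum_congr rfl fun j _ => by rw [hrep j]]
  simp only [mul_add, Finset.sum_add_distrib, Finset.mul_sum, Finset.sum_mul, mul_assoc]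
  rw [add_assoc]
  congr 1
  rw [Finset.sum_comm]
  rw [Finset.sum_congr rfl fun jq _ => Finset.sum_comm]
  rw [Finset.sum_comm]

lemma isOpen_goodSet (σ : ℕ → ℝ → ℝ) (w : ℕ → ℕ) (L : ℕ) (sv tv : ℕ → ℝ)
    (hσ : ∀ i, 1 ≤ i → i ≤ L → Continuous (σ i)) (K : Set (Fin (w 0) → ℝ))
    (hKc : IsCompact K) :
    IsOpen {α : Params w L | ∀ x ∈ K, nGoodAt σ w L sv tv α.1 x} := by
  rw [isOpen_iff_mem_nhds]
  intro α₀ hα₀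
  have key : ∀ x ∈ K, ∀ᶠ p : Params w L × (Fin (w 0) → ℝ) in nhds (α₀, x),
      nGoodAt σ w L sv tv p.1.1 p.2 := by
    intro x hx
    unfold nGoodAt
    rw [Filter.eventually_all]
    intro k
    rw [Filter.eventually_all]
    intro i
    have hc : Continuous fun p : Params w L × (Fin (w 0) → ℝ) =>
        (∑ j, (p.1.1 k).1 i j * hiddenOut σ w L p.1.1 k k.isLt.le p.2 j) + (p.1.1 k).2 i := by
      refine Continuous.add (continuous_finset_sum _ fun j _ => Continuous.mul ?_ ?_) ?_
      · exact (continuous_apply j).comp ((continuous_apply i).comp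
          (continuous_fst.comp ((continuous_apply k).comp (continuous_fst.comp continuous_fst))))
      · exact (continuous_apply j).comp ((continuous_hiddenOut2 hσ k k.isLt.le).comp
          ((continuous_fst.comp continuous_fst).prodMk continuous_snd))
      · exact (continuous_apply i).comp (continuous_snd.comp
          ((continuous_apply k).comp (continuous_fst.comp continuous_fst)))
    exact hc.continuousAt.eventually_mem (isOpen_Ioo.mem_nhds (hα₀ x hx k i))
  exact hKc.eventually_forall_of_forall_eventually key

lemma nQa_const (βv : ℕ → ℝ) (w : ℕ → ℕ) (L : ℕ) (θ : Hid w L)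
    (hβ : ∀ n, βv n ≠ 0) (hw' : ∀ i, 1 ≤ i → i ≤ L → 0 < w i)
    (hθ : ∀ i : Fin L, 0 < (i : ℕ) → ∃ e : ℝ, e ≠ 0 ∧ ∀ a b, (θ i).1 a b = e) :
    ∀ (k : ℕ) (h : k + 1 < L), ∃ q : ℝ, q ≠ 0 ∧
      ∀ i j, nQa βv w L θ (k + 1) h i j = q := by
  intro k
  induction k with
  | zero =>
      intro h
      obtain ⟨e, he0, he⟩ := hθ ⟨1, h⟩ Nat.one_pos
      refine ⟨βv 2 * (e * βv 1), mul_ne_zero (hβ 2) (mul_ne_zero he0 (hβ 1)), fun i j => ?_⟩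
      simp only [nQa, he, ite_mul, zero_mul, mul_ite, mul_zero, Finset.sum_ite_eq',
        Finset.mem_univ, if_true]
  | succ k ih =>
      intro h
      obtain ⟨q, hq0, hq⟩ := ih (Nat.lt_of_succ_lt h)
      obtain ⟨e, he0, he⟩ := hθ ⟨k + 2, h⟩ (Nat.succ_pos _)
      have hwk : 0 < w (k + 2) := hw' (k + 2) (by omega) (by omega)
      refine ⟨βv (k + 3) * ((w (k + 2) : ℝ) * (e * q)),
        mul_ne_zero (hβ _) (mul_ne_zero (Nat.cast_ne_zero.mpr hwk.ne') (mul_ne_zero he0 hq0)),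
        fun i j => ?_⟩
      rw [show nQa βv w L θ (k + 1 + 1) h i j =
          βv (k + 3) * ∑ j', (θ ⟨k + 2, h⟩).1 i j' *
            nQa βv w L θ (k + 1) (Nat.lt_of_succ_lt h) j' j from rfl]
      rw [Finset.sum_congr rfl fun j' _ => by rw [he, hq j' j]]
      rw [Finset.sum_const, Finset.card_univ, Fintype.card_fin, nsmul_eq_mul]

lemma sum_nQa_ne_zero (βv : ℕ → ℝ) (w : ℕ → ℕ) (L' : ℕ) (θ : Hid w (L' + 1))
    (hβ : ∀ n, βv n ≠ 0) (hw' : ∀ i, 1 ≤ i → i ≤ L' + 1 → 0 < w i)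
    (hθ : ∀ i : Fin (L' + 1), 0 < (i : ℕ) → ∃ e : ℝ, e ≠ 0 ∧ ∀ a b, (θ i).1 a b = e)
    (j0 : Fin (w 1)) :
    (∑ j, nQa βv w (L' + 1) θ L' (Nat.lt_succ_self L') j j0) ≠ 0 := by
  cases L' with
  | zero =>
      simp only [nQa, Finset.sum_ite_eq', Finset.mem_univ, if_true]
      exact hβ 1
  | succ k =>
      obtain ⟨q, hq0, hq⟩ := nQa_const βv w (k + 2) θ hβ hw' hθ k (Nat.lt_succ_self _)
      rw [Finset.sum_congr rfl fun j _ => hq j j0]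
      rw [Finset.sum_const, Finset.card_univ, Fintype.card_fin, nsmul_eq_mul]
      have hwk : 0 < w (k + 2) := hw' (k + 2) (by omega) (by omega)
      exact mul_ne_zero (Nat.cast_ne_zero.mpr hwk.ne') hq0

lemma good_base (σ : ℕ → ℝ → ℝ) (w : ℕ → ℕ) (L' : ℕ) (sv tv βv γv Bv : ℕ → ℝ)
    (hσa : ∀ k : ℕ, k < L' + 1 → ∀ y ∈ Set.Ioo (sv (k + 1)) (tv (k + 1)),
      σ (k + 1) y = βv (k + 1) * y + γv (k + 1))
    (hB : ∀ n y, y ∈ Set.Ioo (sv n) (tv n) → |βv n * y + γv n| ≤ Bv n)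
    (θ : Hid w (L' + 1)) (x : Fin (w 0) → ℝ)
    (h1 : ∀ i : Fin (w 1),
      (∑ j, (θ ⟨0, Nat.succ_pos L'⟩).1 i j * x j) + (θ ⟨0, Nat.succ_pos L'⟩).2 i ∈
        Set.Ioo (sv 1) (tv 1))
    (hstep : ∀ (k : ℕ) (h : k + 1 < L' + 1) (i : Fin (w (k + 2))) (y : Fin (w (k + 1)) → ℝ),
      (∀ j, |y j| ≤ Bv (k + 1)) →
      (∑ j, (θ ⟨k + 1, h⟩).1 i j * y j) + (θ ⟨k + 1, h⟩).2 i ∈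
        Set.Ioo (sv (k + 2)) (tv (k + 2))) :
    nGoodAt σ w (L' + 1) sv tv θ x := by
  have main : ∀ (k : ℕ) (h : k < L' + 1),
      (∀ i, (∑ j, (θ ⟨k, h⟩).1 i j * hiddenOut σ w (L' + 1) θ k (le_of_lt h) x j) +
          (θ ⟨k, h⟩).2 i ∈ Set.Ioo (sv (k + 1)) (tv (k + 1))) ∧
      (∀ j, |hiddenOut σ w (L' + 1) θ (k + 1) h x j| ≤ Bv (k + 1)) := by
    intro k
    induction k with
    | zero =>
        intro h
        have hP : ∀ i, (∑ j, (θ ⟨0, h⟩).1 i j *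
            hiddenOut σ w (L' + 1) θ 0 (le_of_lt h) x j) + (θ ⟨0, h⟩).2 i ∈
            Set.Ioo (sv 1) (tv 1) := fun i => h1 i
        refine ⟨hP, fun j => ?_⟩
        rw [show hiddenOut σ w (L' + 1) θ (0 + 1) h x j =
            βv 1 * ((∑ jj, (θ ⟨0, h⟩).1 j jj *
              hiddenOut σ w (L' + 1) θ 0 (le_of_lt h) x jj) + (θ ⟨0, h⟩).2 j) + γv 1 from
          hσa 0 h _ (hP j)]
        exact hB 1 _ (hP j)
    | succ k ih =>
        intro h
        obtain ⟨hPk, hQk⟩ := ih (Nat.lt_of_succ_lt h)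
        have hP : ∀ i, (∑ j, (θ ⟨k + 1, h⟩).1 i j *
            hiddenOut σ w (L' + 1) θ (k + 1) (le_of_lt h) x j) + (θ ⟨k + 1, h⟩).2 i ∈
            Set.Ioo (sv (k + 2)) (tv (k + 2)) := fun i =>
          hstep k h i (fun j => hiddenOut σ w (L' + 1) θ (k + 1) (le_of_lt h) x j)
            (fun j => hQk j)
        refine ⟨hP, fun j => ?_⟩
        rw [show hiddenOut σ w (L' + 1) θ (k + 1 + 1) h x j =
            βv (k + 2) * ((∑ jj, (θ ⟨k + 1, h⟩).1 j jj *
              hiddenOut σ w (L' + 1) θ (k + 1) (le_of_lt h) x jj) + (θ ⟨k + 1, h⟩).2 j) +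
              γv (k + 2) from hσa (k + 1) h _ (hP j)]
        exact hB (k + 2) _ (hP j)
  intro k i
  exact (main k k.isLt).1 i

/-- Linear projection on parameter space killing the first row of `A₁` and the
output bias. -/
def Pzero (w : ℕ → ℕ) (L : ℕ) : Params w L →ₗ[ℝ] Params w L where
  toFun ξ := (fun i => ((fun a b => if (i : ℕ) = 0 ∧ (a : ℕ) = 0 then 0 else (ξ.1 i).1 a b),
      (ξ.1 i).2), (ξ.2.1, 0))
  map_add' ξ η := by
    refine Prod.ext ?_ ?_
    · funext i
      refine Prod.ext ?_ rfl
      funext a b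
      by_cases hc : (i : ℕ) = 0 ∧ (a : ℕ) = 0 <;>
        simp [hc, Prod.fst_add, Pi.add_apply]
    · exact Prod.ext rfl (by simp)
  map_smul' c ξ := by
    refine Prod.ext ?_ ?_
    · funext i
      refine Prod.ext ?_ rfl
      funext a b
      by_cases hc : (i : ℕ) = 0 ∧ (a : ℕ) = 0 <;>
        simp [hc]
    · exact Prod.ext rfl (by simp)

/-- Linear projection extracting the first row of `A₁` and the output bias. -/
def qproj (w : ℕ → ℕ) (L : ℕ) (hL : 0 < L) (j0 : Fin (w 1)) :
    Params w L →ₗ[ℝ] ((Fin (w 0) → ℝ) × ℝ) where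
  toFun ξ := ((ξ.1 ⟨0, hL⟩).1 j0, ξ.2.2)
  map_add' _ _ := rfl
  map_smul' _ _ := rfl

end Aux

set_option maxHeartbeats 1600000 in
set_option synthInstance.maxHeartbeats 1000000 in
/-- **Lemma 4.4.** If every activation function is continuous and affine and
nonconstant on some nonempty open interval and an affine best approximation of `y_T`
with respect to `𝓛` exists, then there is a set `E ⊆ D` of Hausdorff dimension at
least `m - d - 1` all of whose elements are local minima of the training problem (P)
with loss value equal to `min_{(a,c)} 𝓛(z_{a,c}, y_T)`. -/
theorem local_minima_from_nonconstant_affine_segments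
    (w : ℕ → ℕ) (L : ℕ) (hL : 0 < L) (hw0 : 0 < w 0) (hw : ∀ i, 1 ≤ i → i ≤ L → 0 < w i)
    (σ : ℕ → ℝ → ℝ)
    (hσ : ∀ i, 1 ≤ i → i ≤ L → Continuous (σ i))
    (K : Set (Fin (w 0) → ℝ)) (hKne : K.Nonempty) (hKc : IsCompact K)
    (𝓛 : C(K, ℝ) → C(K, ℝ) → ℝ) (yT : C(K, ℝ))
    -- each activation is affine and nonconstant on a nonempty open interval
    (haff : ∀ i, 1 ≤ i → i ≤ L → ∃ s t β γ : ℝ, s < t ∧ β ≠ 0 ∧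
      ∀ x ∈ Set.Ioo s t, σ i x = β * x + γ)
    -- existence of an affine best approximation
    (hmin : ∃ (a₀ : Fin (w 0) → ℝ) (c₀ : ℝ), ∀ (a : Fin (w 0) → ℝ) (c : ℝ),
      𝓛 (affineCM K a₀ c₀) yT ≤ 𝓛 (affineCM K a c) yT) :
    ∃ E : Set (Params w L),
      (↑(mdim w L - w 0 - 1) : ℝ≥0∞) ≤ dimH E ∧
      ∀ α ∈ E,
        -- `α` is a local minimum of (P)
        (∃ r > (0 : ℝ), ∀ β ∈ Metric.ball α r,
          𝓛 (Psi σ w L hσ K α) yT ≤ 𝓛 (Psi σ w L hσ K β) yT) ∧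
        -- the loss value at `α` equals `min_{(a,c)} 𝓛(z_{a,c}, y_T)`
        ((∀ (a : Fin (w 0) → ℝ) (c : ℝ),
            𝓛 (Psi σ w L hσ K α) yT ≤ 𝓛 (affineCM K a c) yT) ∧
          ∃ (a : Fin (w 0) → ℝ) (c : ℝ),
            𝓛 (Psi σ w L hσ K α) yT = 𝓛 (affineCM K a c) yT) := by
  classical
  obtain ⟨L', rfl⟩ : ∃ L', L = L' + 1 := ⟨L - 1, (Nat.succ_pred_eq_of_pos hL).symm⟩
  obtain ⟨a₀, c₀, hmin₀⟩ := hmin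
  have haff2 : ∀ i : ℕ, ∃ s t β γ : ℝ, s < t ∧ β ≠ 0 ∧
      (1 ≤ i → i ≤ L' + 1 → ∀ x ∈ Set.Ioo s t, σ i x = β * x + γ) := by
    intro i
    by_cases h1 : 1 ≤ i ∧ i ≤ L' + 1
    · obtain ⟨s, t, β, γ, hst, hβ, hf⟩ := haff i h1.1 h1.2
      exact ⟨s, t, β, γ, hst, hβ, fun _ _ => hf⟩
    · exact ⟨0, 1, 1, 0, zero_lt_one, one_ne_zero, fun ha hb => absurd ⟨ha, hb⟩ h1⟩
  choose sv tv βv γv hst hβ hσaux using haff2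
  have hσa : ∀ k : ℕ, k < L' + 1 → ∀ y ∈ Set.Ioo (sv (k + 1)) (tv (k + 1)),
      σ (k + 1) y = βv (k + 1) * y + γv (k + 1) := fun k hk =>
    hσaux (k + 1) (by omega) (by omega)
  set i₀ : Fin (L' + 1) := ⟨0, Nat.succ_pos L'⟩ with hi₀
  have hw1 : 0 < w 1 := hw 1 le_rfl (by omega)
  set j₀ : Fin (w 1) := ⟨0, hw1⟩ with hj₀
  set Gs : Set (Params w (L' + 1)) := {α | ∀ x ∈ K, nGoodAt σ w (L' + 1) sv tv α.1 x} with hGs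
  have hGsOpen : IsOpen Gs := isOpen_goodSet σ w (L' + 1) sv tv hσ K hKc
  have hPsiAff : ∀ α ∈ Gs, Psi σ w (L' + 1) hσ K α =
      affineCM K (nav βv w L' α) (ncv βv γv w L' α) := by
    intro α hα
    apply ContinuousMap.ext
    rintro ⟨x, hx⟩
    exact netFun_affine σ w L' βv γv sv tv hσa α x (hα x hx)
  -- bound on K
  obtain ⟨R, hR⟩ : ∃ R, ∀ x ∈ K, ∀ j, |x j| ≤ R := by
    obtain ⟨r, hr⟩ := hKc.isBounded.subset_closedBall 0
    refine ⟨r, fun x hx j => ?_⟩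
    have hxr := hr hx
    rw [Metric.mem_closedBall, dist_zero_right] at hxr
    exact le_trans (norm_le_pi_norm x j) hxr
  have hR0 : 0 ≤ R := by
    obtain ⟨x₀, hx₀⟩ := hKne
    exact le_trans (abs_nonneg _) (hR x₀ hx₀ ⟨0, hw0⟩)
  set C : ℝ := (∑ j, |a₀ j|) * R + 1 with hC
  have hsum0 : 0 ≤ (∑ j, |a₀ j|) * R :=
    mul_nonneg (Finset.sum_nonneg fun j _ => abs_nonneg _) hR0
  have hC0 : 0 < C := by rw [hC]; linarith
  have haxC : ∀ x ∈ K, |∑ j, a₀ j * x j| ≤ C - 1 := by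
    intro x hx
    calc |∑ j, a₀ j * x j| ≤ ∑ j, |a₀ j * x j| := Finset.abs_sum_le_sum_abs _ _
      _ ≤ ∑ j, |a₀ j| * R := Finset.sum_le_sum fun j _ => by
          rw [abs_mul]
          exact mul_le_mul_of_nonneg_left (hR x hx j) (abs_nonneg _)
      _ = (∑ j, |a₀ j|) * R := by rw [Finset.sum_mul]
      _ = C - 1 := by rw [hC]; ring
  set mid : ℕ → ℝ := fun n => (sv n + tv n) / 2 with hmid
  set hwd : ℕ → ℝ := fun n => (tv n - sv n) / 2 with hhwd
  have hhwd0 : ∀ n, 0 < hwd n := fun n => by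
    have := hst n; simp only [hhwd]; linarith
  have hIoo : ∀ n y, |y - mid n| < hwd n → y ∈ Set.Ioo (sv n) (tv n) := by
    intro n y hy
    rw [abs_lt] at hy
    obtain ⟨h1, h2⟩ := hy
    simp only [hmid, hhwd] at h1 h2
    exact ⟨by linarith, by linarith⟩
  set Bb : ℕ → ℝ := fun n => |βv n| * (|sv n| + |tv n|) + |γv n| + 1 with hBb
  have hBb0 : ∀ n, 0 < Bb n := fun n => by
    simp only [hBb]; positivity
  have hBbd : ∀ n y, y ∈ Set.Ioo (sv n) (tv n) → |βv n * y + γv n| ≤ Bb n := by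
    intro n y hy
    obtain ⟨h1, h2⟩ := hy
    have hy2 : |y| ≤ |sv n| + |tv n| := by
      rw [abs_le]
      constructor
      · have := neg_abs_le (sv n)
        have := le_abs_self (tv n)
        have := abs_nonneg (tv n)
        linarith
      · have := le_abs_self (tv n)
        have := abs_nonneg (sv n)
        linarith
    calc |βv n * y + γv n| ≤ |βv n * y| + |γv n| := abs_add_le _ _
      _ = |βv n| * |y| + |γv n| := by rw [abs_mul]
      _ ≤ |βv n| * (|sv n| + |tv n|) + |γv n| := by
          have := mul_le_mul_of_nonneg_left hy2 (abs_nonneg (βv n))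
          linarith
      _ ≤ Bb n := by simp only [hBb]; linarith
  set epsv : ℕ → ℝ := fun n => hwd n / ((w (n - 1) : ℝ) * Bb (n - 1) + 1) with hepsv
  have hepsd : ∀ n : ℕ, 0 ≤ (w n : ℝ) * Bb n := fun n =>
    mul_nonneg (Nat.cast_nonneg _) (hBb0 _).le
  have hepsv0 : ∀ n, 0 < epsv n := fun n => by
    simp only [hepsv]
    exact div_pos (hhwd0 n) (by have := hepsd (n - 1); linarith)
  set ε₁ : ℝ := hwd 1 / C with hε₁
  have hε₁0 : 0 < ε₁ := div_pos (hhwd0 1) hC0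
  -- base hidden parameters
  set θb : Hid w (L' + 1) := Function.update
      (fun i : Fin (L' + 1) => ((fun _ _ => epsv ((i : ℕ) + 1)), (fun _ => mid ((i : ℕ) + 1))))
      i₀ ((fun a b => if a = j₀ then ε₁ * a₀ b else 0), fun _ => mid 1) with hθb
  have hθbi₀ : θb i₀ = ((fun a b => if a = j₀ then ε₁ * a₀ b else 0), fun _ => mid 1) := by
    rw [hθb]; exact Function.update_self _ _ _
  have hθbo : ∀ i : Fin (L' + 1), i ≠ i₀ →
      θb i = ((fun _ _ => epsv ((i : ℕ) + 1)), (fun _ => mid ((i : ℕ) + 1))) := by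
    intro i hi; rw [hθb]; exact Function.update_of_ne hi _ _
  have hne_i₀ : ∀ (k : ℕ) (h : k + 1 < L' + 1), (⟨k + 1, h⟩ : Fin (L' + 1)) ≠ i₀ := by
    intro k h hcon
    have h2 := congrArg Fin.val hcon
    rw [hi₀] at h2
    simp at h2
  -- the base point is good
  have hGdθb : ∀ x ∈ K, nGoodAt σ w (L' + 1) sv tv θb x := by
    intro x hx
    refine good_base σ w L' sv tv βv γv Bb hσa hBbd θb x ?_ ?_
    · intro i
      rw [show θb ⟨0, Nat.succ_pos L'⟩ =
          ((fun a b => if a = j₀ then ε₁ * a₀ b else 0), fun _ => mid 1) from hθbi₀]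
      dsimp only
      refine hIoo 1 _ ?_
      rw [add_sub_cancel_right]
      rcases eq_or_ne i j₀ with hij | hij
      · subst hij
        simp only [eq_self_iff_true, if_true]
        have he : (∑ j, ε₁ * a₀ j * x j) = ε₁ * ∑ j, a₀ j * x j := by
          rw [Finset.mul_sum]
          exact Finset.sum_congr rfl fun j _ => by ring
        rw [he, abs_mul, abs_of_pos hε₁0]
        have h1 := haxC x hx
        have h2 : ε₁ * C = hwd 1 := by
          rw [hε₁]; field_simp
        nlinarith [hε₁0, abs_nonneg (∑ j, a₀ j * x j)]
      · simp only [if_neg hij, zero_mul, Finset.sum_const_zero, abs_zero]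
        exact hhwd0 1
    · intro k h i y hy
      rw [hθbo ⟨k + 1, h⟩ (hne_i₀ k h)]
      dsimp only
      refine hIoo (k + 2) _ ?_
      rw [add_sub_cancel_right]
      have hb2 : |∑ j, epsv (k + 2) * y j| ≤ (w (k + 1) : ℝ) * (epsv (k + 2) * Bb (k + 1)) := by
        calc |∑ j, epsv (k + 2) * y j| ≤ ∑ j, |epsv (k + 2) * y j| :=
            Finset.abs_sum_le_sum_abs _ _
          _ ≤ ∑ _j : Fin (w (k + 1)), epsv (k + 2) * Bb (k + 1) :=
            Finset.sum_le_sum fun j _ => by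
              rw [abs_mul, abs_of_pos (hepsv0 _)]
              exact mul_le_mul_of_nonneg_left (hy j) (hepsv0 _).le
          _ = (w (k + 1) : ℝ) * (epsv (k + 2) * Bb (k + 1)) := by
            rw [Finset.sum_const, Finset.card_univ, Fintype.card_fin, nsmul_eq_mul]
      have hlt : (w (k + 1) : ℝ) * (epsv (k + 2) * Bb (k + 1)) < hwd (k + 2) := by
        have h1 : epsv (k + 2) = hwd (k + 2) / ((w (k + 1) : ℝ) * Bb (k + 1) + 1) := by
          simp only [hepsv]
          norm_num
        have hD0 : 0 ≤ (w (k + 1) : ℝ) * Bb (k + 1) := hepsd (k + 1)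
        have hD1 : (0 : ℝ) < (w (k + 1) : ℝ) * Bb (k + 1) + 1 := by linarith
        have h2 : (w (k + 1) : ℝ) * (epsv (k + 2) * Bb (k + 1)) =
            ((w (k + 1) : ℝ) * Bb (k + 1)) * hwd (k + 2) / ((w (k + 1) : ℝ) * Bb (k + 1) + 1) := by
          rw [h1]; field_simp
        rw [h2, div_lt_iff₀ hD1]
        nlinarith [hhwd0 (k + 2)]
      exact lt_of_le_of_lt hb2 hlt
  -- nonvanishing coefficient
  have hθconst : ∀ i : Fin (L' + 1), 0 < (i : ℕ) →
      ∃ e : ℝ, e ≠ 0 ∧ ∀ a b, (θb i).1 a b = e := by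
    intro i hi
    refine ⟨epsv ((i : ℕ) + 1), (hepsv0 _).ne', fun a b => ?_⟩
    rw [hθbo i (by intro hcon; rw [hcon, hi₀] at hi; simp at hi)]
  set S₀ : ℝ := ∑ j, nQa βv w (L' + 1) θb L' (Nat.lt_succ_self L') j j₀ with hS₀
  have hS₀0 : S₀ ≠ 0 := by
    rw [hS₀]
    exact sum_nQa_ne_zero βv w L' θb hβ hw hθconst j₀
  set T : ℝ := 1 / (ε₁ * S₀) with hT
  set bb : ℝ := c₀ - ∑ j, T * nua βv γv w (L' + 1) θb L' (Nat.lt_succ_self L') j with hbb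
  set αb : Params w (L' + 1) := (θb, (fun _ => T, bb)) with hαb
  have hrvαb : ∀ j, nrv βv w L' αb j =
      T * ∑ j', nQa βv w (L' + 1) θb L' (Nat.lt_succ_self L') j' j := by
    intro j
    simp only [nrv, hαb, Finset.mul_sum]
  have hrvj₀ : nrv βv w L' αb j₀ = 1 / ε₁ := by
    rw [hrvαb j₀, ← hS₀, hT]
    field_simp
  -- the solving map
  set Ff : Params w (L' + 1) → Fin (w 0) → ℝ := fun ξ j'' =>
    (nrv βv w L' ξ j₀)⁻¹ *
      (a₀ j'' - ∑ j ∈ Finset.univ.erase j₀, nrv βv w L' ξ j * (ξ.1 i₀).1 j j'') with hFf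
  set Gg : Params w (L' + 1) → ℝ := fun ξ =>
    c₀ - ∑ j, ξ.2.1 j * nuvL βv γv w L' ξ j with hGg
  set Φ : Params w (L' + 1) → Params w (L' + 1) := fun ξ =>
    (Function.update ξ.1 i₀ (Function.update (ξ.1 i₀).1 j₀ (Ff ξ), (ξ.1 i₀).2),
      (ξ.2.1, Gg ξ)) with hΦ
  have hΦ1 : ∀ (ξ : Params w (L' + 1)) (i : Fin (L' + 1)), i ≠ i₀ → (Φ ξ).1 i = ξ.1 i := by
    intro ξ i hi
    rw [hΦ]
    dsimp only
    exact Function.update_of_ne hi _ _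
  have hΦi₀ : ∀ ξ : Params w (L' + 1),
      (Φ ξ).1 i₀ = (Function.update (ξ.1 i₀).1 j₀ (Ff ξ), (ξ.1 i₀).2) := by
    intro ξ
    rw [hΦ]
    dsimp only
    exact Function.update_self _ _ _
  have hntz : ∀ i : Fin (L' + 1), 0 < (i : ℕ) → i ≠ i₀ := by
    intro i hi hcon
    rw [hcon, hi₀] at hi
    simp at hi
  have hΦQ : ∀ (ξ : Params w (L' + 1)) (k : ℕ) (h : k < L' + 1),
      nQa βv w (L' + 1) (Φ ξ).1 k h = nQa βv w (L' + 1) ξ.1 k h := by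
    intro ξ k h
    exact nQa_congr βv w (L' + 1) ξ.1 (Φ ξ).1 (fun i hi => hΦ1 ξ i (hntz i hi)) k h
  have hΦu : ∀ (ξ : Params w (L' + 1)) (k : ℕ) (h : k < L' + 1),
      nua βv γv w (L' + 1) (Φ ξ).1 k h = nua βv γv w (L' + 1) ξ.1 k h := by
    intro ξ k h
    refine nua_congr βv γv w (L' + 1) ξ.1 (Φ ξ).1 (fun i hi => hΦ1 ξ i (hntz i hi))
      (fun hh => ?_) k h
    rw [show (⟨0, hh⟩ : Fin (L' + 1)) = i₀ from rfl, hΦi₀ ξ]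
  have hΦrv : ∀ (ξ : Params w (L' + 1)) (j : Fin (w 1)),
      nrv βv w L' (Φ ξ) j = nrv βv w L' ξ j := by
    intro ξ j
    simp only [nrv]
    rw [hΦQ ξ L' (Nat.lt_succ_self L')]
  have hΦuL : ∀ (ξ : Params w (L' + 1)) (j : Fin (w (L' + 1))),
      nuvL βv γv w L' (Φ ξ) j = nuvL βv γv w L' ξ j := by
    intro ξ j
    simp only [nuvL]
    rw [hΦu ξ L' (Nat.lt_succ_self L')]
  have hΦnc : ∀ ξ : Params w (L' + 1), ncv βv γv w L' (Φ ξ) = c₀ := by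
    intro ξ
    have h1 : (∑ j, (Φ ξ).2.1 j * nuvL βv γv w L' (Φ ξ) j) =
        ∑ j, ξ.2.1 j * nuvL βv γv w L' ξ j :=
      Finset.sum_congr rfl fun j _ => by rw [hΦuL ξ j]
    calc ncv βv γv w L' (Φ ξ)
        = (∑ j, ξ.2.1 j * nuvL βv γv w L' ξ j) + Gg ξ := by
          show (∑ j, (Φ ξ).2.1 j * nuvL βv γv w L' (Φ ξ) j) + (Φ ξ).2.2 = _
          exact congrArg₂ (· + ·) h1 rfl
      _ = c₀ := by simp only [hGg]; ring
  have hΦav : ∀ ξ : Params w (L' + 1), nrv βv w L' ξ j₀ ≠ 0 → nav βv w L' (Φ ξ) = a₀ := by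
    intro ξ hne
    funext j''
    show (∑ j, nrv βv w L' (Φ ξ) j * ((Φ ξ).1 i₀).1 j j'') = a₀ j''
    rw [Finset.sum_congr rfl fun j _ => by rw [hΦrv ξ j, hΦi₀ ξ]]
    rw [← Finset.add_sum_erase _
      (fun j => nrv βv w L' ξ j * (Function.update (ξ.1 i₀).1 j₀ (Ff ξ), (ξ.1 i₀).2).1 j j'')
      (Finset.mem_univ j₀)]
    dsimp only
    rw [Function.update_self]
    rw [Finset.sum_congr rfl fun j hj => by
      rw [Function.update_of_ne (Finset.ne_of_mem_erase hj)]]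
    simp only [hFf]
    rw [← mul_assoc, mul_inv_cancel₀ hne, one_mul]
    ring
  -- the base point is a fixed point of Φ
  have hrow0 : ∀ j : Fin (w 1), j ≠ j₀ → ∀ b, (θb i₀).1 j b = 0 := by
    intro j hj b
    rw [hθbi₀]
    exact if_neg hj
  have hFαb : Ff αb = (θb i₀).1 j₀ := by
    funext j''
    simp only [hFf]
    rw [hrvj₀]
    have hz : (∑ j ∈ Finset.univ.erase j₀, nrv βv w L' αb j * (αb.1 i₀).1 j j'') = 0 :=
      Finset.sum_eq_zero fun j hj => by
        rw [show (αb.1 i₀).1 j j'' = 0 from hrow0 j (Finset.ne_of_mem_erase hj) j'', mul_zero]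
    rw [hz, sub_zero, one_div, inv_inv]
    rw [show (θb i₀).1 j₀ j'' = ε₁ * a₀ j'' from by rw [hθbi₀]; simp]
  have hΦαb : Φ αb = αb := by
    rw [hΦ]
    dsimp only
    refine Prod.ext ?_ ?_
    · show Function.update αb.1 i₀ (Function.update (αb.1 i₀).1 j₀ (Ff αb), (αb.1 i₀).2) = αb.1
      rw [show Function.update (αb.1 i₀).1 j₀ (Ff αb) = (αb.1 i₀).1 from by
        rw [show Ff αb = (αb.1 i₀).1 j₀ from hFαb]
        exact Function.update_eq_self _ _]
      exact Function.update_eq_self _ _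
    · show (αb.2.1, Gg αb) = αb.2
      have hGgαb : Gg αb = bb := rfl
      rw [hGgαb]
  -- open sets
  have hcrv : ∀ j : Fin (w 1), Continuous fun α : Params w (L' + 1) => nrv βv w L' α j := by
    intro j
    simp only [nrv]
    refine continuous_finset_sum _ fun j' _ => Continuous.mul ?_ ?_
    · exact (continuous_apply j').comp (continuous_fst.comp continuous_snd)
    · exact (continuous_apply j).comp ((continuous_apply j').comp
        ((continuous_nQa βv w (L' + 1) L' (Nat.lt_succ_self L')).comp continuous_fst))
  have hcuL : ∀ j : Fin (w (L' + 1)),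
      Continuous fun α : Params w (L' + 1) => nuvL βv γv w L' α j := by
    intro j
    simp only [nuvL]
    exact (continuous_apply j).comp
      ((continuous_nua βv γv w (L' + 1) L' (Nat.lt_succ_self L')).comp continuous_fst)
  set Us : Set (Params w (L' + 1)) :=
    {α | (∀ x ∈ K, nGoodAt σ w (L' + 1) sv tv α.1 x) ∧ nrv βv w L' α j₀ ≠ 0} with hUs
  have hUsOpen : IsOpen Us := by
    rw [hUs]
    exact (isOpen_goodSet σ w (L' + 1) sv tv hσ K hKc).inter
      (isOpen_compl_singleton.preimage (hcrv j₀))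
  set Vs : Set (Params w (L' + 1)) := {α | nrv βv w L' α j₀ ≠ 0} with hVs
  have hVsOpen : IsOpen Vs := isOpen_compl_singleton.preimage (hcrv j₀)
  have hGgc : Continuous Gg := by
    simp only [hGg]
    refine continuous_const.sub (continuous_finset_sum _ fun j _ => Continuous.mul ?_ (hcuL j))
    exact (continuous_apply j).comp (continuous_fst.comp continuous_snd)
  have hΦcont : ContinuousOn Φ Vs := by
    rw [hΦ]
    refine ContinuousOn.prodMk ?_ (Continuous.continuousOn ?_)
    · refine continuousOn_pi.mpr fun i => ?_
      by_cases hii : i = i₀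
      · subst hii
        simp only [Function.update_self]
        refine ContinuousOn.prodMk ?_ (Continuous.continuousOn ?_)
        · refine continuousOn_pi.mpr fun a => ?_
          by_cases haa : a = j₀
          · subst haa
            simp only [Function.update_self]
            refine continuousOn_pi.mpr fun b => ?_
            simp only [hFf]
            refine ContinuousOn.mul (ContinuousOn.inv₀ (hcrv j₀).continuousOn
              fun ξ hξ => hξ) ?_
            refine Continuous.continuousOn ?_
            refine continuous_const.sub (continuous_finset_sum _ fun j _ =>
              Continuous.mul (hcrv j) ?_)
            exact (continuous_apply b).comp ((continuous_apply j).comp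
              (continuous_fst.comp ((continuous_apply i₀).comp continuous_fst)))
          · simp only [Function.update_of_ne haa]
            exact (Continuous.continuousOn ((continuous_apply a).comp
              (continuous_fst.comp ((continuous_apply i₀).comp continuous_fst))))
        · exact continuous_snd.comp ((continuous_apply i₀).comp continuous_fst)
      · simp only [Function.update_of_ne hii]
        exact (Continuous.continuousOn ((continuous_apply i).comp continuous_fst))
    · exact (continuous_fst.comp continuous_snd).prodMk hGgc
  set Os : Set (Params w (L' + 1)) := Vs ∩ Φ ⁻¹' Us with hOs
  have hOsOpen : IsOpen Os := hΦcont.isOpen_inter_preimage hVsOpen hUsOpen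
  have hrvαb0 : nrv βv w L' αb j₀ ≠ 0 := by
    rw [hrvj₀]
    exact one_div_ne_zero hε₁0.ne'
  have hαbUs : αb ∈ Us := ⟨hGdθb, hrvαb0⟩
  have hαbOs : αb ∈ Os := ⟨hrvαb0, by rw [Set.mem_preimage, hΦαb]; exact hαbUs⟩
  obtain ⟨ε, hε0, hball⟩ := Metric.isOpen_iff.mp hOsOpen αb hαbOs
  -- the linear algebra
  set W₀ : Submodule ℝ (Params w (L' + 1)) :=
    LinearMap.ker (qproj w (L' + 1) (Nat.succ_pos L') j₀) with hW₀
  set Pl : Params w (L' + 1) →ₗ[ℝ] Params w (L' + 1) := Pzero w (L' + 1) with hPl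
  have hPfix : ∀ ζ : Params w (L' + 1), ζ ∈ W₀ → Pl ζ = ζ := by
    intro ζ hζ
    rw [hW₀, LinearMap.mem_ker] at hζ
    have h1 : (ζ.1 ⟨0, Nat.succ_pos L'⟩).1 j₀ = 0 := congrArg Prod.fst hζ
    have h2 : ζ.2.2 = 0 := congrArg Prod.snd hζ
    rw [hPl]
    refine Prod.ext ?_ (Prod.ext rfl h2.symm)
    funext i
    refine Prod.ext ?_ rfl
    funext a b
    show (if (i : ℕ) = 0 ∧ (a : ℕ) = 0 then 0 else (ζ.1 i).1 a b) = (ζ.1 i).1 a b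
    split_ifs with hc
    · obtain ⟨hc1, hc2⟩ := hc
      have hii : i = ⟨0, Nat.succ_pos L'⟩ := Fin.ext hc1
      subst hii
      have haa : a = j₀ := Fin.ext hc2
      subst haa
      exact (congrFun h1 b).symm
    · rfl
  have hPlΦ : ∀ ξ : Params w (L' + 1), Pl (Φ ξ) = Pl ξ := by
    intro ξ
    rw [hPl]
    refine Prod.ext ?_ rfl
    funext i
    refine Prod.ext ?_ ?_
    · funext a b
      show (if (i : ℕ) = 0 ∧ (a : ℕ) = 0 then 0 else ((Φ ξ).1 i).1 a b)
        = (if (i : ℕ) = 0 ∧ (a : ℕ) = 0 then 0 else (ξ.1 i).1 a b)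
      split_ifs with hc
      · rfl
      · by_cases hii : i = i₀
        · subst hii
          rw [hΦi₀ ξ]
          have ha : a ≠ j₀ := by
            intro hcon
            refine hc ⟨?_, ?_⟩
            · rw [hi₀]
            · rw [hcon, hj₀]
          show Function.update (ξ.1 i₀).1 j₀ (Ff ξ) a b = (ξ.1 i₀).1 a b
          rw [Function.update_of_ne ha]
        · rw [hΦ1 ξ i hii]
    · show ((Φ ξ).1 i).2 = (ξ.1 i).2
      by_cases hii : i = i₀
      · subst hii
        rw [hΦi₀ ξ]
      · rw [hΦ1 ξ i hii]
  have hPlidem : ∀ ξ : Params w (L' + 1), Pl (Pl ξ) = Pl ξ := by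
    intro ξ
    rw [hPl]
    refine Prod.ext ?_ rfl
    funext i
    refine Prod.ext ?_ rfl
    funext a b
    show (if (i : ℕ) = 0 ∧ (a : ℕ) = 0 then 0
        else (if (i : ℕ) = 0 ∧ (a : ℕ) = 0 then 0 else (ξ.1 i).1 a b))
      = (if (i : ℕ) = 0 ∧ (a : ℕ) = 0 then 0 else (ξ.1 i).1 a b)
    split_ifs <;> rfl
  set δb : Params w (L' + 1) := αb - Pl αb with hδb
  have hPlδb : Pl δb = 0 := by
    rw [hδb, map_sub, hPlidem, sub_self]
  have hζbmem : Pl αb ∈ W₀ := by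
    rw [hW₀, LinearMap.mem_ker]
    refine Prod.ext ?_ rfl
    funext b
    show (if ((⟨0, Nat.succ_pos L'⟩ : Fin (L' + 1)) : ℕ) = 0 ∧ ((j₀ : ℕ) = 0)
      then (0 : ℝ) else (αb.1 ⟨0, Nat.succ_pos L'⟩).1 j₀ b) = 0
    rw [if_pos ⟨rfl, by rw [hj₀]⟩]
  set ζb : ↥W₀ := ⟨Pl αb, hζbmem⟩ with hζb
  set Θf : ↥W₀ → Params w (L' + 1) := fun ζ => Φ ((ζ : Params w (L' + 1)) + δb) with hΘf
  set E : Set (Params w (L' + 1)) := Θf '' (Metric.ball ζb ε) with hE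
  have hξmem : ∀ ζ : ↥W₀, ζ ∈ Metric.ball ζb ε → ((ζ : Params w (L' + 1)) + δb) ∈ Os := by
    intro ζ hζ
    apply hball
    rw [Metric.mem_ball] at hζ ⊢
    have hab : αb = (ζb : Params w (L' + 1)) + δb := by
      show αb = Pl αb + (αb - Pl αb)
      abel
    rw [hab, dist_add_right]
    exact hζ
  refine ⟨E, ?_, ?_⟩
  · -- dimension bound
    haveI : FiniteDimensional ℝ (Params w (L' + 1)) := by infer_instance
    set Plc := LinearMap.toContinuousLinearMap Pl with hPlc
    have hPE : (⇑Plc) '' E = Subtype.val '' Metric.ball ζb ε := by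
      rw [hE, Set.image_image]
      refine Set.image_congr fun ζ hζ => ?_
      show Plc (Θf ζ) = ↑ζ
      have h1 : Plc (Θf ζ) = Pl (Θf ζ) := rfl
      rw [h1, hΘf]
      dsimp only
      rw [hPlΦ, map_add, hPlδb, add_zero, hPfix _ ζ.2]
    have hd1 : dimH (Metric.ball ζb ε) = (Module.finrank ℝ ↥W₀ : ℝ≥0∞) :=
      Real.dimH_of_mem_nhds (Metric.ball_mem_nhds ζb hε0)
    have hd2 : dimH ((Subtype.val : ↥W₀ → Params w (L' + 1)) '' Metric.ball ζb ε) =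
        dimH (Metric.ball ζb ε) := isometry_subtype_coe.dimH_image _
    have hd3 : dimH ((⇑Plc) '' E) ≤ dimH E := Plc.lipschitz.dimH_image_le E
    have hrn := LinearMap.finrank_range_add_finrank_ker
      (qproj w (L' + 1) (Nat.succ_pos L') j₀)
    have hcod : Module.finrank ℝ ((Fin (w 0) → ℝ) × ℝ) = w 0 + 1 := by
      simp [Module.finrank_prod, Module.finrank_pi, Module.finrank_self, Fintype.card_fin]
    have hrle : Module.finrank ℝ
        ↥(LinearMap.range (qproj w (L' + 1) (Nat.succ_pos L') j₀)) ≤ w 0 + 1 := by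
      have h5 := Submodule.finrank_le (LinearMap.range (qproj w (L' + 1) (Nat.succ_pos L') j₀))
      rwa [hcod] at h5
    have hPar : Module.finrank ℝ (Params w (L' + 1)) = mdim w (L' + 1) := by
      have h1 : Module.finrank ℝ (Params w (L' + 1)) =
          (∑ i : Fin (L' + 1), (w (i + 1) * w i + w (i + 1))) + (w (L' + 1) + 1) := by
        simp [Module.finrank_prod, Module.finrank_pi_fintype, Module.finrank_pi,
          Module.finrank_self, Fintype.card_fin, Finset.sum_const, smul_eq_mul]
      rw [h1, mdim]
      rw [Fin.sum_univ_eq_sum_range (fun i => w (i + 1) * w i + w (i + 1)) (L' + 1)]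
      have hmm : ∀ i : ℕ, w (i + 1) * w i + w (i + 1) = w (i + 1) * (w i + 1) :=
        fun i => by ring
      simp only [hmm]
    have hker : mdim w (L' + 1) - w 0 - 1 ≤ Module.finrank ℝ ↥W₀ := by
      rw [hPar] at hrn
      rw [hW₀]
      omega
    calc ((mdim w (L' + 1) - w 0 - 1 : ℕ) : ℝ≥0∞)
        ≤ (Module.finrank ℝ ↥W₀ : ℝ≥0∞) := by exact_mod_cast Nat.cast_le.mpr hker
      _ = dimH (Metric.ball ζb ε) := hd1.symm
      _ = dimH ((Subtype.val : ↥W₀ → Params w (L' + 1)) '' Metric.ball ζb ε) := hd2.symm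
      _ = dimH ((⇑Plc) '' E) := by rw [hPE]
      _ ≤ dimH E := hd3
  · -- local minimality and optimal value
    rintro α ⟨ζ, hζ, rfl⟩
    obtain ⟨hξV, hξU⟩ := hξmem ζ hζ
    obtain ⟨hGdΦ, hrvΦ⟩ := hξU
    have hao : nav βv w L' (Θf ζ) = a₀ := hΦav _ hξV
    have hco : ncv βv γv w L' (Θf ζ) = c₀ := hΦnc _
    have hGdΘ : Θf ζ ∈ Gs := hGdΦ
    have hPsiα : Psi σ w (L' + 1) hσ K (Θf ζ) = affineCM K a₀ c₀ := by
      rw [hPsiAff (Θf ζ) hGdΘ, hao, hco]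
    refine ⟨?_, ?_, ?_⟩
    · obtain ⟨r, hr0, hrball⟩ := Metric.isOpen_iff.mp hGsOpen (Θf ζ) hGdΘ
      refine ⟨r, hr0, fun β hβball => ?_⟩
      have hGdβ : β ∈ Gs := hrball hβball
      rw [hPsiα, hPsiAff β hGdβ]
      exact hmin₀ _ _
    · intro a c
      rw [hPsiα]
      exact hmin₀ a c
    · exact ⟨a₀, c₀, by rw [hPsiα]⟩
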